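/- Let α ∈ (0,1/2) and L, M > 0, and let h, σ : [0,1] → ℝ be measurable with |h| ≤ L and |σ| ≤ M. For 0 < v < s ≤ 1 define g₅(s,v) = ∫_0^v ∫_v^s ∫_v^u s^α r^{−α} h(r) v^{−α} (x−v)^{α−1} x^α σ(x) (s−r)^{−(α+1)} dx du dr. Then the iterated integral converges absolutely and there is a constant C, depending only on α, L, M, such that |g₅(s,v)| ≤ C v^{−α} s (s−v)^α for all 0 < v < s ≤ 1. In particular, for every fixed s ∈ (0,1], g₅(s,v) → 0 as v → s⁻. -/

import Mathlib

open MeasureTheory Set intervalIntegral Filter Topology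

/-- The kernel `g₅` from the regular-case Onsager–Machlup computation. -/
noncomputable def g₅ (α : ℝ) (h σ : ℝ → ℝ) (s v : ℝ) : ℝ :=
  ∫ r in (0:ℝ)..v, ∫ u in v..s, ∫ x in v..u,
    s ^ α * r ^ (-α) * h r * v ^ (-α) *
      (x - v) ^ (α - 1) * x ^ α * σ x * (s - r) ^ (-(α + 1))

/-- Splitting bound for the product of two negative powers. -/
lemma aux_rpow_split (α : ℝ) (hα : 0 ≤ α) {a b : ℝ} (ha : 0 < a) (hb : 0 < b) :
    a ^ (-α) * b ^ (-α) ≤ 2 ^ α * (a + b) ^ (-α) * (a ^ (-α) + b ^ (-α)) := by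
  have h2 : (0:ℝ) < 2 := by norm_num
  have key : ∀ x y : ℝ, 0 < x → 0 < y → x ≤ y →
      x ^ (-α) * y ^ (-α) ≤ 2 ^ α * (x + y) ^ (-α) * (x ^ (-α) + y ^ (-α)) := by
    intro x y hx hy hxy
    have h1 : x + y ≤ 2 * y := by linarith
    have h2y : (2 * y) ^ (-α) ≤ (x + y) ^ (-α) :=
      Real.rpow_le_rpow_of_nonpos (by linarith) h1 (by linarith)
    have h3 : (2 * y) ^ (-α) = 2 ^ (-α) * y ^ (-α) := Real.mul_rpow (by norm_num) hy.le
    have h4 : 2 ^ α * (2 * y) ^ (-α) = y ^ (-α) := by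
      rw [h3, ← mul_assoc, ← Real.rpow_add h2, add_neg_cancel, Real.rpow_zero, one_mul]
    have h5 : x ^ (-α) * y ^ (-α) ≤ 2 ^ α * (x + y) ^ (-α) * x ^ (-α) := by
      have := mul_le_mul_of_nonneg_left h2y (le_of_lt (Real.rpow_pos_of_pos h2 α))
      rw [h4] at this
      calc x ^ (-α) * y ^ (-α) = y ^ (-α) * x ^ (-α) := by ring
        _ ≤ (2 ^ α * (x + y) ^ (-α)) * x ^ (-α) :=
            mul_le_mul_of_nonneg_right this (Real.rpow_nonneg hx.le _)
        _ = 2 ^ α * (x + y) ^ (-α) * x ^ (-α) := by ring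
    have hxpos : 0 ≤ x ^ (-α) := Real.rpow_nonneg hx.le _
    have hypos : 0 ≤ y ^ (-α) := Real.rpow_nonneg hy.le _
    have hc : 0 ≤ 2 ^ α * (x + y) ^ (-α) :=
      mul_nonneg (Real.rpow_nonneg h2.le _) (Real.rpow_nonneg (by linarith) _)
    nlinarith
  rcases le_total a b with hab | hab
  · exact key a b ha hb hab
  · have := key b a hb ha hab
    calc a ^ (-α) * b ^ (-α) = b ^ (-α) * a ^ (-α) := by ring
      _ ≤ 2 ^ α * (b + a) ^ (-α) * (b ^ (-α) + a ^ (-α)) := this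
      _ = 2 ^ α * (a + b) ^ (-α) * (a ^ (-α) + b ^ (-α)) := by ring_nf

/-- For `α ∈ (0,1/2)`, `|h| ≤ L`, `|σ| ≤ M`, the iterated integral defining
`g₅` converges absolutely and there is a constant `C = C(α, L, M)` with
`|g₅(s,v)| ≤ C v^{-α} s (s-v)^α` for `0 < v < s ≤ 1`; in particular `g₅`
vanishes on the diagonal. -/
theorem g₅_bound
    (α L M : ℝ) (hα0 : 0 < α) (hα1 : α < 1 / 2) (hL : 0 < L) (hM : 0 < M) :
    ∃ C : ℝ, 0 < C ∧
      ∀ h σ : ℝ → ℝ, Measurable h → Measurable σ →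
        (∀ x ∈ Icc (0:ℝ) 1, |h x| ≤ L) → (∀ x ∈ Icc (0:ℝ) 1, |σ x| ≤ M) →
        (∀ v s : ℝ, 0 < v → v < s → s ≤ 1 →
          (∀ r ∈ Ioo (0:ℝ) v, ∀ u ∈ Ioo v s,
            IntervalIntegrable
              (fun x => s ^ α * r ^ (-α) * h r * v ^ (-α) *
                (x - v) ^ (α - 1) * x ^ α * σ x * (s - r) ^ (-(α + 1)))
              volume v u) ∧
          (∀ r ∈ Ioo (0:ℝ) v,
            IntervalIntegrable
              (fun u => ∫ x in v..u, s ^ α * r ^ (-α) * h r * v ^ (-α) *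
                (x - v) ^ (α - 1) * x ^ α * σ x * (s - r) ^ (-(α + 1)))
              volume v s) ∧
          IntervalIntegrable
            (fun r => ∫ u in v..s, ∫ x in v..u,
              s ^ α * r ^ (-α) * h r * v ^ (-α) *
                (x - v) ^ (α - 1) * x ^ α * σ x * (s - r) ^ (-(α + 1)))
            volume 0 v ∧
          |g₅ α h σ s v| ≤ C * v ^ (-α) * s * (s - v) ^ α) ∧
        ∀ s ∈ Ioc (0:ℝ) 1,
          Tendsto (fun v => g₅ α h σ s v) (nhdsWithin s (Iio s)) (nhds 0) := by
  have h1α : 0 < 1 - α := by linarith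
  refine ⟨4 * L * M / (α * (1 - α)), by positivity, ?_⟩
  intro h σ hmh hmσ hhL hσM
  have main : ∀ v s : ℝ, 0 < v → v < s → s ≤ 1 →
      (∀ r ∈ Ioo (0:ℝ) v, ∀ u ∈ Ioo v s,
        IntervalIntegrable
          (fun x => s ^ α * r ^ (-α) * h r * v ^ (-α) *
            (x - v) ^ (α - 1) * x ^ α * σ x * (s - r) ^ (-(α + 1)))
          volume v u) ∧
      (∀ r ∈ Ioo (0:ℝ) v,
        IntervalIntegrable
          (fun u => ∫ x in v..u, s ^ α * r ^ (-α) * h r * v ^ (-α) *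
            (x - v) ^ (α - 1) * x ^ α * σ x * (s - r) ^ (-(α + 1)))
          volume v s) ∧
      IntervalIntegrable
        (fun r => ∫ u in v..s, ∫ x in v..u,
          s ^ α * r ^ (-α) * h r * v ^ (-α) *
            (x - v) ^ (α - 1) * x ^ α * σ x * (s - r) ^ (-(α + 1)))
        volume 0 v ∧
      |g₅ α h σ s v| ≤ 4 * L * M / (α * (1 - α)) * v ^ (-α) * s * (s - v) ^ α := by
    intro v s hv hvs hs1
    have hs0 : 0 < s := hv.trans hvs
    have hsv : 0 < s - v := by linarith
    -- the inner function of x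
    set φ : ℝ → ℝ := fun x => (x - v) ^ (α - 1) * x ^ α * σ x with hφdef
    have hφmeas : Measurable φ := by
      apply Measurable.mul _ hmσ
      fun_prop
    -- the factorization of the integrand
    have hfun : ∀ r x : ℝ,
        s ^ α * r ^ (-α) * h r * v ^ (-α) *
          (x - v) ^ (α - 1) * x ^ α * σ x * (s - r) ^ (-(α + 1)) =
        (s ^ α * r ^ (-α) * h r * v ^ (-α) * (s - r) ^ (-(α + 1))) * φ x := by
      intro r x; simp only [hφdef]; ring
    -- integrability of φ on subintervals of [v, s]
    have hφint : ∀ u : ℝ, v ≤ u → u ≤ s → IntervalIntegrable φ volume v u := by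
      intro u huv hus
      have h1 : IntervalIntegrable (fun x : ℝ => x ^ (α - 1)) volume 0 (u - v) :=
        intervalIntegrable_rpow' (by linarith)
      have h2 : IntervalIntegrable (fun x : ℝ => (x - v) ^ (α - 1)) volume v u := by
        simpa using h1.comp_sub_right v
      have hdom : IntervalIntegrable (fun x : ℝ => M * s ^ α * (x - v) ^ (α - 1)) volume v u :=
        h2.const_mul _
      apply hdom.mono_fun' hφmeas.aestronglyMeasurable
      filter_upwards [ae_restrict_mem measurableSet_uIoc] with x hx
      rw [uIoc_of_le huv] at hx
      have hx0 : 0 < x := hv.trans hx.1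
      have hxv : 0 ≤ x - v := by linarith [hx.1]
      have hxs : x ≤ s := hx.2.trans hus
      have hb1 : x ^ α ≤ s ^ α := Real.rpow_le_rpow hx0.le hxs hα0.le
      have hb2 : |σ x| ≤ M := hσM x ⟨hx0.le, by linarith⟩
      have hr1 : (0:ℝ) ≤ (x - v) ^ (α - 1) := Real.rpow_nonneg hxv _
      have hr2 : (0:ℝ) ≤ x ^ α := Real.rpow_nonneg hx0.le _
      calc ‖φ x‖ = (x - v) ^ (α - 1) * (x ^ α * |σ x|) := by
            simp only [hφdef, Real.norm_eq_abs, abs_mul, abs_of_nonneg hr1, abs_of_nonneg hr2]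
            ring
        _ ≤ (x - v) ^ (α - 1) * (s ^ α * M) := by
            apply mul_le_mul_of_nonneg_left _ hr1
            exact mul_le_mul hb1 hb2 (abs_nonneg _) (Real.rpow_nonneg hs0.le _)
        _ = M * s ^ α * (x - v) ^ (α - 1) := by ring
    -- bound for the primitive of φ
    have hIx : ∀ u : ℝ, ∫ x in v..u, (x - v) ^ (α - 1) = (u - v) ^ α / α := by
      intro u
      rw [show (fun x : ℝ => (x - v) ^ (α - 1)) = fun x => (fun y : ℝ => y ^ (α - 1)) (x - v)
        from rfl]
      rw [intervalIntegral.integral_comp_sub_right (fun y : ℝ => y ^ (α - 1)) v]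
      rw [integral_rpow (Or.inl (by linarith))]
      rw [sub_self, Real.zero_rpow (by linarith), show α - 1 + 1 = α by ring]
      ring
    have hφprim : ∀ u : ℝ, v ≤ u → u ≤ s →
        |∫ x in v..u, φ x| ≤ M * s ^ α / α * (s - v) ^ α := by
      intro u huv hus
      have hdom : IntervalIntegrable (fun x : ℝ => M * s ^ α * (x - v) ^ (α - 1)) volume v u := by
        have h1 : IntervalIntegrable (fun x : ℝ => x ^ (α - 1)) volume 0 (u - v) :=
          intervalIntegrable_rpow' (by linarith)
        have h2 : IntervalIntegrable (fun x : ℝ => (x - v) ^ (α - 1)) volume v u := by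
          simpa using h1.comp_sub_right v
        exact h2.const_mul _
      have hb : ∀ᵐ x ∂(volume.restrict (Set.uIoc v u)),
          ‖φ x‖ ≤ M * s ^ α * (x - v) ^ (α - 1) := by
        filter_upwards [ae_restrict_mem measurableSet_uIoc] with x hx
        rw [uIoc_of_le huv] at hx
        have hx0 : 0 < x := hv.trans hx.1
        have hxv : 0 ≤ x - v := by linarith [hx.1]
        have hxs : x ≤ s := hx.2.trans hus
        have hb1 : x ^ α ≤ s ^ α := Real.rpow_le_rpow hx0.le hxs hα0.le
        have hb2 : |σ x| ≤ M := hσM x ⟨hx0.le, by linarith⟩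
        have hr1 : (0:ℝ) ≤ (x - v) ^ (α - 1) := Real.rpow_nonneg hxv _
        have hr2 : (0:ℝ) ≤ x ^ α := Real.rpow_nonneg hx0.le _
        calc ‖φ x‖ = (x - v) ^ (α - 1) * (x ^ α * |σ x|) := by
              simp only [hφdef, Real.norm_eq_abs, abs_mul, abs_of_nonneg hr1, abs_of_nonneg hr2]
              ring
          _ ≤ (x - v) ^ (α - 1) * (s ^ α * M) := by
              apply mul_le_mul_of_nonneg_left _ hr1
              exact mul_le_mul hb1 hb2 (abs_nonneg _) (Real.rpow_nonneg hs0.le _)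
          _ = M * s ^ α * (x - v) ^ (α - 1) := by ring
      have key := intervalIntegral.norm_integral_le_abs_of_norm_le hb hdom
      rw [Real.norm_eq_abs] at key
      refine key.trans ?_
      rw [intervalIntegral.integral_const_mul, hIx u]
      have huv' : (0:ℝ) ≤ u - v := by linarith
      have h01 : (u - v) ^ α ≤ (s - v) ^ α := Real.rpow_le_rpow huv' (by linarith) hα0.le
      have hMs : (0:ℝ) ≤ M * s ^ α := mul_nonneg hM.le (Real.rpow_nonneg hs0.le _)
      rw [abs_of_nonneg (mul_nonneg hMs (div_nonneg (Real.rpow_nonneg huv' _) hα0.le))]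
      calc M * s ^ α * ((u - v) ^ α / α) ≤ M * s ^ α * ((s - v) ^ α / α) := by
            apply mul_le_mul_of_nonneg_left _ hMs
            exact (div_le_div_iff_of_pos_right hα0).mpr h01
        _ = M * s ^ α / α * (s - v) ^ α := by ring
    -- the primitive of φ on [v,s]
    have hφintvs : IntervalIntegrable φ volume v s := hφint s hvs.le le_rfl
    have hprim_cont : ContinuousOn (fun u => ∫ x in v..u, φ x) (uIcc v s) :=
      continuousOn_primitive_interval' hφintvs left_mem_uIcc
    have hprim_int : IntervalIntegrable (fun u => ∫ x in v..u, φ x) volume v s :=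
      hprim_cont.intervalIntegrable
    set A : ℝ := ∫ u in v..s, ∫ x in v..u, φ x with hAdef
    have hA_bound : |A| ≤ M * s ^ α / α * (s - v) ^ α * (s - v) := by
      have key : ‖∫ u in v..s, ∫ x in v..u, φ x‖ ≤ (M * s ^ α / α * (s - v) ^ α) * |s - v| := by
        apply intervalIntegral.norm_integral_le_of_norm_le_const
        intro u hu
        rw [uIoc_of_le hvs.le] at hu
        rw [Real.norm_eq_abs]
        exact hφprim u hu.1.le hu.2
      rw [Real.norm_eq_abs] at key
      rw [hAdef]
      refine key.trans ?_
      rw [abs_of_pos hsv]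
    -- item 1
    have item1 : ∀ r ∈ Ioo (0:ℝ) v, ∀ u ∈ Ioo v s,
        IntervalIntegrable (fun x => s ^ α * r ^ (-α) * h r * v ^ (-α) *
          (x - v) ^ (α - 1) * x ^ α * σ x * (s - r) ^ (-(α + 1))) volume v u := by
      intro r _ u hu
      have heq : (fun x => s ^ α * r ^ (-α) * h r * v ^ (-α) *
          (x - v) ^ (α - 1) * x ^ α * σ x * (s - r) ^ (-(α + 1)))
          = fun x => (s ^ α * r ^ (-α) * h r * v ^ (-α) * (s - r) ^ (-(α + 1))) * φ x := by
        funext x; exact hfun r x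
      rw [heq]
      exact (hφint u hu.1.le hu.2.le).const_mul _
    -- item 2
    have item2 : ∀ r ∈ Ioo (0:ℝ) v,
        IntervalIntegrable (fun u => ∫ x in v..u, s ^ α * r ^ (-α) * h r * v ^ (-α) *
          (x - v) ^ (α - 1) * x ^ α * σ x * (s - r) ^ (-(α + 1))) volume v s := by
      intro r _
      have heq : (fun u => ∫ x in v..u, s ^ α * r ^ (-α) * h r * v ^ (-α) *
          (x - v) ^ (α - 1) * x ^ α * σ x * (s - r) ^ (-(α + 1)))
          = fun u => (s ^ α * r ^ (-α) * h r * v ^ (-α) * (s - r) ^ (-(α + 1))) *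
            ∫ x in v..u, φ x := by
        funext u
        simp only [hfun]
        rw [intervalIntegral.integral_const_mul]
      rw [heq]
      exact hprim_int.const_mul _
    -- factored form of the r-integrand
    have hF_eq : ∀ r : ℝ, (∫ u in v..s, ∫ x in v..u,
        s ^ α * r ^ (-α) * h r * v ^ (-α) *
          (x - v) ^ (α - 1) * x ^ α * σ x * (s - r) ^ (-(α + 1)))
        = (s ^ α * r ^ (-α) * h r * v ^ (-α) * (s - r) ^ (-(α + 1))) * A := by
      intro r
      rw [hAdef]
      simp only [hfun, intervalIntegral.integral_const_mul]
    -- item 3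
    have hKint : IntervalIntegrable
        (fun r : ℝ => r ^ (-α) * h r * (s - r) ^ (-(α + 1))) volume 0 v := by
      have hdom : IntervalIntegrable
          (fun r : ℝ => L * (s - v) ^ (-(α + 1)) * r ^ (-α)) volume 0 v :=
        (intervalIntegrable_rpow' (by linarith)).const_mul _
      apply hdom.mono_fun' (by apply Measurable.aestronglyMeasurable; fun_prop)
      filter_upwards [ae_restrict_mem measurableSet_uIoc] with r hr
      rw [uIoc_of_le hv.le] at hr
      have hr0 : 0 < r := hr.1
      have hsr : 0 < s - r := by linarith [hr.2]
      have h1 : (s - r) ^ (-(α + 1)) ≤ (s - v) ^ (-(α + 1)) :=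
        Real.rpow_le_rpow_of_nonpos hsv (by linarith [hr.2]) (by linarith)
      have h2 : |h r| ≤ L := hhL r ⟨hr0.le, by linarith [hr.2]⟩
      have hrn : (0:ℝ) ≤ r ^ (-α) := Real.rpow_nonneg hr0.le _
      have hsrn : (0:ℝ) ≤ (s - r) ^ (-(α + 1)) := Real.rpow_nonneg hsr.le _
      calc ‖r ^ (-α) * h r * (s - r) ^ (-(α + 1))‖
          = r ^ (-α) * |h r| * (s - r) ^ (-(α + 1)) := by
            rw [Real.norm_eq_abs, abs_mul, abs_mul, abs_of_nonneg hrn, abs_of_nonneg hsrn]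
        _ ≤ r ^ (-α) * L * (s - v) ^ (-(α + 1)) :=
            mul_le_mul (mul_le_mul_of_nonneg_left h2 hrn) h1 hsrn (mul_nonneg hrn hL.le)
        _ = L * (s - v) ^ (-(α + 1)) * r ^ (-α) := by ring
    have item3 : IntervalIntegrable
        (fun r => ∫ u in v..s, ∫ x in v..u,
          s ^ α * r ^ (-α) * h r * v ^ (-α) *
            (x - v) ^ (α - 1) * x ^ α * σ x * (s - r) ^ (-(α + 1))) volume 0 v := by
      have heq : (fun r => ∫ u in v..s, ∫ x in v..u,
          s ^ α * r ^ (-α) * h r * v ^ (-α) *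
            (x - v) ^ (α - 1) * x ^ α * σ x * (s - r) ^ (-(α + 1)))
          = fun r => (s ^ α * v ^ (-α)) * (r ^ (-α) * h r * (s - r) ^ (-(α + 1))) * A := by
        funext r; rw [hF_eq r]; ring
      rw [heq]
      exact (hKint.const_mul _).mul_const _
    -- the quantitative bound
    have hbound : |g₅ α h σ s v| ≤
        4 * L * M / (α * (1 - α)) * v ^ (-α) * s * (s - v) ^ α := by
      have hg5 : g₅ α h σ s v = ∫ r in (0:ℝ)..v,
          (s ^ α * r ^ (-α) * h r * v ^ (-α) * (s - r) ^ (-(α + 1))) * A := by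
        rw [g₅]
        apply intervalIntegral.integral_congr
        intro r _
        exact hF_eq r
      set D : ℝ := |A| * (L * s ^ α * v ^ (-α) * (s - v)⁻¹ * (2 ^ α * s ^ (-α))) with hDdef
      have hsa0 : (0:ℝ) ≤ s ^ α := Real.rpow_nonneg hs0.le _
      have hva0 : (0:ℝ) ≤ v ^ (-α) := Real.rpow_nonneg hv.le _
      have hsma0 : (0:ℝ) ≤ s ^ (-α) := Real.rpow_nonneg hs0.le _
      have h2a0 : (0:ℝ) ≤ (2:ℝ) ^ α := Real.rpow_nonneg (by norm_num) _
      have hsvi0 : (0:ℝ) ≤ (s - v)⁻¹ := (inv_nonneg).mpr hsv.le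
      have hD0 : 0 ≤ D := by
        apply mul_nonneg (abs_nonneg _)
        exact mul_nonneg (mul_nonneg (mul_nonneg (mul_nonneg hL.le hsa0) hva0) hsvi0)
          (mul_nonneg h2a0 hsma0)
      -- integrability of the dominating function
      have hG1 : IntervalIntegrable (fun r : ℝ => r ^ (-α)) volume 0 v :=
        intervalIntegrable_rpow' (by linarith)
      have hG2 : IntervalIntegrable (fun r : ℝ => (s - r) ^ (-α)) volume 0 v := by
        have := (intervalIntegrable_rpow' (r := -α) (by linarith)
          (a := s) (b := s - v)).comp_sub_left s
        simpa using this
      have hGint : IntervalIntegrable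
          (fun r : ℝ => D * (r ^ (-α) + (s - r) ^ (-α))) volume 0 v :=
        (hG1.add hG2).const_mul _
      -- pointwise domination
      have hae : ∀ᵐ r ∂(volume.restrict (Set.uIoc (0:ℝ) v)),
          ‖(s ^ α * r ^ (-α) * h r * v ^ (-α) * (s - r) ^ (-(α + 1))) * A‖ ≤
          D * (r ^ (-α) + (s - r) ^ (-α)) := by
        filter_upwards [ae_restrict_mem measurableSet_uIoc] with r hr
        rw [uIoc_of_le hv.le] at hr
        have hr0 : 0 < r := hr.1
        have hsr : 0 < s - r := by linarith [hr.2]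
        have h2 : |h r| ≤ L := hhL r ⟨hr0.le, by linarith [hr.2]⟩
        have e1 : (s - r) ^ (-(α + 1)) = (s - r) ^ (-α) * (s - r)⁻¹ := by
          rw [show -(α + 1) = -α + (-1) by ring, Real.rpow_add hsr, Real.rpow_neg_one]
        have hinv : (s - r)⁻¹ ≤ (s - v)⁻¹ := by
          apply inv_anti₀ hsv
          linarith [hr.2]
        have hsplit := aux_rpow_split α hα0.le hr0 hsr
        rw [show r + (s - r) = s by ring] at hsplit
        have hsa : (0:ℝ) ≤ s ^ α := Real.rpow_nonneg hs0.le _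
        have hra : (0:ℝ) ≤ r ^ (-α) := Real.rpow_nonneg hr0.le _
        have hva : (0:ℝ) ≤ v ^ (-α) := Real.rpow_nonneg hv.le _
        have hsra : (0:ℝ) ≤ (s - r) ^ (-α) := Real.rpow_nonneg hsr.le _
        have hsva : (0:ℝ) ≤ (s - v)⁻¹ := (inv_nonneg).mpr hsv.le
        have hsri : (0:ℝ) ≤ (s - r)⁻¹ := (inv_nonneg).mpr hsr.le
        have habs : |s ^ α * r ^ (-α) * h r * v ^ (-α) * (s - r) ^ (-(α + 1))| =
            s ^ α * r ^ (-α) * |h r| * v ^ (-α) * (s - r) ^ (-(α + 1)) := by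
          simp only [abs_mul]
          rw [abs_of_nonneg hsa, abs_of_nonneg hra, abs_of_nonneg hva,
            abs_of_nonneg (Real.rpow_nonneg hsr.le (-(α + 1)))]
        rw [Real.norm_eq_abs, abs_mul, habs, e1]
        calc s ^ α * r ^ (-α) * |h r| * v ^ (-α) * ((s - r) ^ (-α) * (s - r)⁻¹) * |A|
            ≤ s ^ α * r ^ (-α) * L * v ^ (-α) * ((s - r) ^ (-α) * (s - v)⁻¹) * |A| := by
              gcongr
          _ = (s ^ α * L * v ^ (-α) * (s - v)⁻¹ * |A|) * (r ^ (-α) * (s - r) ^ (-α)) := by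
              ring
          _ ≤ (s ^ α * L * v ^ (-α) * (s - v)⁻¹ * |A|) *
              (2 ^ α * s ^ (-α) * (r ^ (-α) + (s - r) ^ (-α))) := by
              refine mul_le_mul_of_nonneg_left hsplit ?_
              exact mul_nonneg (mul_nonneg (mul_nonneg (mul_nonneg hsa hL.le) hva) hsva)
                (abs_nonneg A)
          _ = D * (r ^ (-α) + (s - r) ^ (-α)) := by rw [hDdef]; ring
      have key := intervalIntegral.norm_integral_le_abs_of_norm_le hae hGint
      rw [Real.norm_eq_abs] at key
      rw [hg5]
      refine key.trans ?_
      -- compute the dominating integral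
      have I1 : ∫ r in (0:ℝ)..v, r ^ (-α) = v ^ (1 - α) / (1 - α) := by
        rw [integral_rpow (Or.inl (by linarith : (-1:ℝ) < -α))]
        rw [show -α + 1 = 1 - α by ring, Real.zero_rpow h1α.ne']
        ring
      have I2 : ∫ r in (0:ℝ)..v, (s - r) ^ (-α)
          = (s ^ (1 - α) - (s - v) ^ (1 - α)) / (1 - α) := by
        rw [show (fun r : ℝ => (s - r) ^ (-α)) = fun r => (fun y : ℝ => y ^ (-α)) (s - r)
          from rfl]
        rw [intervalIntegral.integral_comp_sub_left (fun y : ℝ => y ^ (-α)) s]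
        rw [sub_zero]
        rw [integral_rpow (Or.inl (by linarith : (-1:ℝ) < -α))]
        rw [show -α + 1 = 1 - α by ring]
      have hIsum : ∫ r in (0:ℝ)..v, D * (r ^ (-α) + (s - r) ^ (-α)) =
          D * ((∫ r in (0:ℝ)..v, r ^ (-α)) + ∫ r in (0:ℝ)..v, (s - r) ^ (-α)) := by
        rw [intervalIntegral.integral_const_mul, intervalIntegral.integral_add hG1 hG2]
      have hI1b : (∫ r in (0:ℝ)..v, r ^ (-α)) ≤ s ^ (1 - α) / (1 - α) := by
        rw [I1]
        have : v ^ (1 - α) ≤ s ^ (1 - α) := Real.rpow_le_rpow hv.le hvs.le h1α.le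
        exact (div_le_div_iff_of_pos_right h1α).mpr this
      have hI2b : (∫ r in (0:ℝ)..v, (s - r) ^ (-α)) ≤ s ^ (1 - α) / (1 - α) := by
        rw [I2]
        have : (0:ℝ) ≤ (s - v) ^ (1 - α) := Real.rpow_nonneg hsv.le _
        exact (div_le_div_iff_of_pos_right h1α).mpr (by linarith)
      have hI1n : (0:ℝ) ≤ ∫ r in (0:ℝ)..v, r ^ (-α) := by
        rw [I1]
        exact div_nonneg (Real.rpow_nonneg hv.le _) h1α.le
      have hI2n : (0:ℝ) ≤ ∫ r in (0:ℝ)..v, (s - r) ^ (-α) := by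
        rw [I2]
        have h3 : (s - v) ^ (1 - α) ≤ s ^ (1 - α) :=
          Real.rpow_le_rpow hsv.le (by linarith) h1α.le
        have h4 : (0:ℝ) ≤ s ^ (1 - α) - (s - v) ^ (1 - α) := by linarith
        exact div_nonneg h4 h1α.le
      rw [hIsum, abs_of_nonneg (mul_nonneg hD0 (add_nonneg hI1n hI2n))]
      calc D * ((∫ r in (0:ℝ)..v, r ^ (-α)) + ∫ r in (0:ℝ)..v, (s - r) ^ (-α))
          ≤ D * (s ^ (1 - α) / (1 - α) + s ^ (1 - α) / (1 - α)) := by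
            apply mul_le_mul_of_nonneg_left _ hD0
            exact add_le_add hI1b hI2b
        _ ≤ ((M * s ^ α / α * (s - v) ^ α * (s - v)) *
              (L * s ^ α * v ^ (-α) * (s - v)⁻¹ * (2 ^ α * s ^ (-α)))) *
            (s ^ (1 - α) / (1 - α) + s ^ (1 - α) / (1 - α)) := by
            have hsn : (0:ℝ) ≤ s ^ (1 - α) := Real.rpow_nonneg hs0.le _
            apply mul_le_mul_of_nonneg_right _
              (add_nonneg (div_nonneg hsn h1α.le) (div_nonneg hsn h1α.le))
            rw [hDdef]
            apply mul_le_mul_of_nonneg_right hA_bound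
            exact mul_nonneg (mul_nonneg (mul_nonneg (mul_nonneg hL.le hsa0) hva0) hsvi0)
              (mul_nonneg h2a0 hsma0)
        _ = (2 ^ α * 2 * L * M / α / (1 - α)) * v ^ (-α) *
              (s ^ α * (s ^ α * (s ^ (-α) * s ^ (1 - α)))) *
              ((s - v) ^ α * ((s - v) * (s - v)⁻¹)) := by
            ring
        _ = (2 ^ α * 2 * L * M / α / (1 - α)) * v ^ (-α) * s * (s - v) ^ α := by
            have e1 : s ^ α * (s ^ α * (s ^ (-α) * s ^ (1 - α))) = s := by
              rw [← Real.rpow_add hs0, ← Real.rpow_add hs0, ← Real.rpow_add hs0]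
              rw [show α + (α + (-α + (1 - α))) = 1 by ring, Real.rpow_one]
            rw [mul_inv_cancel₀ hsv.ne', mul_one, e1]
        _ ≤ 4 * L * M / (α * (1 - α)) * v ^ (-α) * s * (s - v) ^ α := by
            have h2a : (2:ℝ) ^ α ≤ 2 := by
              calc (2:ℝ) ^ α ≤ 2 ^ (1:ℝ) :=
                    Real.rpow_le_rpow_of_exponent_le one_le_two (by linarith)
                _ = 2 := Real.rpow_one 2
            have hva : (0:ℝ) ≤ v ^ (-α) := Real.rpow_nonneg hv.le _
            have hsvn : (0:ℝ) ≤ (s - v) ^ α := Real.rpow_nonneg hsv.le _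
            have hden : (0:ℝ) < α * (1 - α) := mul_pos hα0 h1α
            have hnum : 2 ^ α * 2 * L * M / α / (1 - α) ≤ 4 * L * M / (α * (1 - α)) := by
              rw [div_div]
              apply (div_le_div_iff_of_pos_right hden).mpr
              have hx := mul_le_mul_of_nonneg_right h2a
                (le_of_lt (mul_pos (mul_pos (by norm_num : (0:ℝ) < 2) hL) hM))
              nlinarith [hx]
            apply mul_le_mul_of_nonneg_right _ hsvn
            apply mul_le_mul_of_nonneg_right _ hs0.le
            exact mul_le_mul_of_nonneg_right hnum hva
    exact ⟨item1, item2, item3, hbound⟩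
  refine ⟨main, ?_⟩
  -- the limit on the diagonal
  intro s hs
  obtain ⟨hs0, hs1⟩ := hs
  refine squeeze_zero_norm'
    (a := fun v => 4 * L * M / (α * (1 - α)) * v ^ (-α) * s * (s - v) ^ α) ?_ ?_
  · have hmem : Ioo (0:ℝ) s ∈ nhdsWithin s (Iio s) := by
      rw [show Ioo (0:ℝ) s = Ioi 0 ∩ Iio s from (Ioi_inter_Iio).symm]
      exact inter_mem (mem_nhdsWithin_of_mem_nhds (Ioi_mem_nhds hs0)) self_mem_nhdsWithin
    filter_upwards [hmem] with v hv
    rw [Real.norm_eq_abs]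
    exact (main v s hv.1 hv.2 hs1).2.2.2
  · have t0 : Tendsto (fun v : ℝ => s - v) (nhdsWithin s (Iio s)) (nhds 0) := by
      have : Tendsto (fun v : ℝ => s - v) (nhds s) (nhds (s - s)) :=
        (continuous_const.sub continuous_id).tendsto s
      rw [sub_self] at this
      exact this.mono_left nhdsWithin_le_nhds
    have t1 : Tendsto (fun v : ℝ => (s - v) ^ α) (nhdsWithin s (Iio s)) (nhds 0) := by
      have hc : ContinuousAt (fun x : ℝ => x ^ α) 0 :=
        Real.continuousAt_rpow_const 0 α (Or.inr hα0.le)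
      have := hc.tendsto.comp t0
      rwa [Real.zero_rpow hα0.ne'] at this
    have t2 : Tendsto (fun v : ℝ => 4 * L * M / (α * (1 - α)) * v ^ (-α) * s)
        (nhdsWithin s (Iio s))
        (nhds (4 * L * M / (α * (1 - α)) * s ^ (-α) * s)) := by
      have hc : ContinuousAt (fun x : ℝ => x ^ (-α)) s :=
        Real.continuousAt_rpow_const s (-α) (Or.inl hs0.ne')
      exact (((hc.tendsto.const_mul _).mul_const s).mono_left nhdsWithin_le_nhds)
    have := t2.mul t1
    rw [mul_zero] at this
    exact this
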